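/- Let I = ∫_{T³} dt/w₁(0̄,t) ∈ (0,∞), γ = 6, and μ₀ = √6 · I^{-1/2}. Then for every k ∈ T³ and every z < 0, the quantity Δ_{μ₀}(k; z) = ε(k) + 6 - z - μ₀² ∫_{T³} dt/(w₁(k,t) - z) is strictly positive, where w₁(k,t) = ε(k) + ε((k+t)/2) + ε(t). -/

import Mathlib

open MeasureTheory Real Filter
open Pointwise

noncomputable def eps (k : EuclideanSpace ℝ (Fin 3)) : ℝ := ∑ i, (1 - Real.cos (k i))

noncomputable def w1 (k p : EuclideanSpace ℝ (Fin 3)) : ℝ :=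
  eps k + eps ((1 / 2 : ℝ) • (k + p)) + eps p

def T3 : Set (EuclideanSpace ℝ (Fin 3)) := {k | ∀ i, k i ∈ Set.Ioc (-Real.pi) Real.pi}

noncomputable def pibar : EuclideanSpace ℝ (Fin 3) := WithLp.toLp 2 (fun _ => Real.pi)

noncomputable def I0 : ℝ := ∫ t in T3, (w1 (0 : EuclideanSpace ℝ (Fin 3)) t)⁻¹

noncomputable def mu0 : ℝ := Real.sqrt 6 / Real.sqrt I0

lemma eps_nonneg (k : EuclideanSpace ℝ (Fin 3)) : 0 ≤ eps k :=
  Finset.sum_nonneg fun i _ => by nlinarith [Real.cos_le_one (k i)]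

lemma w1_nonneg (k p : EuclideanSpace ℝ (Fin 3)) : 0 ≤ w1 k p := by
  have := eps_nonneg k; have := eps_nonneg ((1 / 2 : ℝ) • (k + p)); have := eps_nonneg p
  unfold w1; linarith

lemma one_sub_cos_eq (x : ℝ) : 1 - Real.cos x = 2 * Real.sin (x/2)^2 := by
  have h2 : (2:ℝ) * (x/2) = x := by ring
  have := Real.cos_two_mul (x/2)
  rw [h2] at this
  have := Real.sin_sq_add_cos_sq (x/2)
  nlinarith

lemma eps_apply (k : EuclideanSpace ℝ (Fin 3)) :
    eps k = (1 - Real.cos (k 0)) + (1 - Real.cos (k 1)) + (1 - Real.cos (k 2)) := by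
  simp [eps, Fin.sum_univ_three]; ring


lemma three_cs (s1 s2 s3 u1 u2 u3 : ℝ) :
    (s1*u1+s2*u2+s3*u3)^2 ≤ (s1^2+s2^2+s3^2)*(u1^2+u2^2+u3^2) := by
  nlinarith [sq_nonneg (s1*u2 - s2*u1), sq_nonneg (s1*u3-s3*u1), sq_nonneg (s2*u3-s3*u2)]

lemma keypoly (a E e b D Q : ℝ) (ha : 0 ≤ a) (hE : 0 ≤ E) (he : 0 ≤ e) (hb : 0 < b)
    (hD : 4 * D^2 ≤ a * E) (hQ : a + b + (e + E) ≤ Q) :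
    2 * Q * (e + E) ≤ (2 + a/3) * (Q^2 - D^2) := by
  nlinarith [mul_nonneg ha hE, mul_nonneg ha he, mul_nonneg (mul_nonneg ha ha) hE,
    mul_nonneg (mul_nonneg ha ha) he, mul_nonneg (mul_nonneg ha hE) he,
    mul_nonneg (mul_nonneg ha hb.le) hE, mul_nonneg ha hb.le,
    sq_nonneg (Q - (a + b + (e+E))), mul_nonneg (sub_nonneg.2 hQ) (mul_nonneg ha hE),
    mul_nonneg (sub_nonneg.2 hQ) (mul_nonneg ha he),
    mul_nonneg (sub_nonneg.2 hQ) ha, mul_nonneg (sub_nonneg.2 hQ) hb.le,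
    mul_nonneg (sub_nonneg.2 hQ) hE, mul_nonneg (sub_nonneg.2 hQ) he,
    mul_nonneg (mul_nonneg (sub_nonneg.2 hQ) (sub_nonneg.2 hQ)) ha]

lemma invsum (a E e b D Q : ℝ) (ha : 0 ≤ a) (hE : 0 ≤ E) (he : 0 ≤ e) (hb : 0 < b)
    (hD : 4 * D^2 ≤ a * E) (hQ : a + b + (e + E) ≤ Q) (h1 : 0 < Q + D) (h2 : 0 < Q - D)
    (hw : 0 < e + E) : (Q+D)⁻¹ + (Q-D)⁻¹ ≤ (2 + a/3) * (e+E)⁻¹ := by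
  have hkey := keypoly a E e b D Q ha hE he hb hD hQ
  rw [show (Q+D)⁻¹ + (Q-D)⁻¹ = 2*Q / ((Q+D)*(Q-D)) from by field_simp; ring,
    show (2 + a/3) * (e+E)⁻¹ = (2 + a/3) / (e+E) from by ring,
    div_le_div_iff₀ (by positivity) hw]
  have h3 : (2+a/3)*((Q+D)*(Q-D)) = (2+a/3)*(Q^2-D^2) := by ring
  rw [h3]; linarith

lemma star (k t : EuclideanSpace ℝ (Fin 3)) (ht : t ∈ T3) {b : ℝ} (hb : 0 < b)
    (hw : 0 < w1 0 t) :
    (w1 k t + b)⁻¹ + (w1 k (-t) + b)⁻¹ ≤ (2 + eps k / 3) * (w1 0 t)⁻¹ := by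
  have happ : ∀ (u v : EuclideanSpace ℝ (Fin 3)) (i : Fin 3),
      ((1/2 : ℝ) • (u + v)) i = (1/2) * (u i + v i) := by
    intro u v i; simp [PiLp.smul_apply, PiLp.add_apply, smul_eq_mul]; ring
  have hneg : ∀ (i : Fin 3), (-t) i = -(t i) := fun i => rfl
  have hzero : ∀ (i : Fin 3), (0 : EuclideanSpace ℝ (Fin 3)) i = 0 := fun i => rfl
  set s0 := Real.sin (k 0 / 2); set s1 := Real.sin (k 1 / 2); set s2 := Real.sin (k 2 / 2)
  set c0 := Real.cos (k 0 / 2); set c1 := Real.cos (k 1 / 2); set c2 := Real.cos (k 2 / 2)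
  set u0 := Real.sin (t 0 / 2); set u1 := Real.sin (t 1 / 2); set u2 := Real.sin (t 2 / 2)
  set v0 := Real.cos (t 0 / 2); set v1 := Real.cos (t 1 / 2); set v2 := Real.cos (t 2 / 2)
  have hcadd : ∀ (x y : ℝ), Real.cos ((1/2) * (x + y)) =
      Real.cos (x/2) * Real.cos (y/2) - Real.sin (x/2) * Real.sin (y/2) := by
    intro x y; rw [show (1/2) * (x + y) = x/2 + y/2 by ring, Real.cos_add]
  have hcsub : ∀ (x y : ℝ), Real.cos ((1/2) * (x + -y)) =
      Real.cos (x/2) * Real.cos (y/2) + Real.sin (x/2) * Real.sin (y/2) := by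
    intro x y; rw [show (1/2) * (x + -y) = x/2 - y/2 by ring, Real.cos_sub]
  set a := 2*(s0^2+s1^2+s2^2) with ha_def
  set E := 2*(u0^2+u1^2+u2^2) with hE_def
  set e := (1-v0)+(1-v1)+(1-v2) with he_def
  set D := s0*u0+s1*u1+s2*u2 with hD_def
  set S := (1-c0*v0)+(1-c1*v1)+(1-c2*v2) with hS_def
  set Q := a + E + b + S with hQ_def
  have hepsk : eps k = a := by
    rw [eps_apply, one_sub_cos_eq, one_sub_cos_eq, one_sub_cos_eq]; ring
  have hepst : eps t = E := by
    rw [eps_apply, one_sub_cos_eq, one_sub_cos_eq, one_sub_cos_eq]; ring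
  have hw1t : w1 k t + b = Q + D := by
    unfold w1
    rw [eps_apply ((1/2 : ℝ) • (k + t)), happ, happ, happ, hcadd, hcadd, hcadd,
      hepsk, hepst]
    simp only [hQ_def, hS_def, hD_def]; ring
  have hw1mt : w1 k (-t) + b = Q - D := by
    unfold w1
    rw [eps_apply ((1/2 : ℝ) • (k + -t)), happ, happ, happ]
    rw [eps_apply (-t)]
    simp only [hneg, Real.cos_neg]
    rw [hcsub, hcsub, hcsub, hepsk]
    rw [show (1 - Real.cos (t 0)) + (1 - Real.cos (t 1)) + (1 - Real.cos (t 2)) = E from by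
      rw [← eps_apply, hepst]]
    simp only [hQ_def, hS_def, hD_def]; ring
  have hw0 : w1 0 t = e + E := by
    unfold w1
    rw [eps_apply (0 : EuclideanSpace ℝ (Fin 3)), eps_apply ((1/2 : ℝ) • ((0:EuclideanSpace ℝ (Fin 3)) + t)),
      happ, happ, happ, hepst]
    simp only [hzero, Real.cos_zero, zero_add]
    rw [show (1/2) * t 0 = t 0 / 2 by ring, show (1/2) * t 1 = t 1 / 2 by ring,
      show (1/2) * t 2 = t 2 / 2 by ring]
    simp only [he_def]; ring
  have hQD1 : 0 < Q + D := by rw [← hw1t]; have := w1_nonneg k t; linarith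
  have hQD2 : 0 < Q - D := by rw [← hw1mt]; have := w1_nonneg k (-t); linarith
  have hvnn : ∀ i : Fin 3, 0 ≤ Real.cos (t i / 2) := by
    intro i
    apply Real.cos_nonneg_of_mem_Icc
    have h1 := (ht i).1; have h2 := (ht i).2; have := Real.pi_pos
    exact Set.mem_Icc.mpr ⟨by linarith, by linarith⟩
  have hv0 : 0 ≤ v0 := hvnn 0
  have hv1 : 0 ≤ v1 := hvnn 1
  have hv2 : 0 ≤ v2 := hvnn 2
  have hvle : v0 ≤ 1 ∧ v1 ≤ 1 ∧ v2 ≤ 1 :=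
    ⟨Real.cos_le_one _, Real.cos_le_one _, Real.cos_le_one _⟩
  have hcle : c0 ≤ 1 ∧ c1 ≤ 1 ∧ c2 ≤ 1 :=
    ⟨Real.cos_le_one _, Real.cos_le_one _, Real.cos_le_one _⟩
  have he0 : 0 ≤ e := by simp only [he_def]; linarith [hvle.1, hvle.2.1, hvle.2.2]
  have hSe : e ≤ S := by
    simp only [he_def, hS_def]
    nlinarith [mul_nonneg hv0 (sub_nonneg.2 hcle.1), mul_nonneg hv1 (sub_nonneg.2 hcle.2.1),
      mul_nonneg hv2 (sub_nonneg.2 hcle.2.2)]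
  have ha0 : 0 ≤ a := by positivity
  have hE0 : 0 ≤ E := by positivity
  have hQge : a + b + (e + E) ≤ Q := by simp only [hQ_def]; linarith
  have hD4 : 4 * D^2 ≤ a * E := by
    have h := three_cs s0 s1 s2 u0 u1 u2
    have h2 : a * E = 4*((s0^2+s1^2+s2^2)*(u0^2+u1^2+u2^2)) := by
      rw [ha_def, hE_def]; ring
    rw [h2, hD_def]; linarith
  have hw0pos : 0 < e + E := by rw [← hw0]; exact hw
  rw [hw1t, hw1mt, hw0, hepsk]
  exact invsum a E e b D Q ha0 hE0 he0 hb hD4 hQge hQD1 hQD2 hw0pos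

def B3 : Set (EuclideanSpace ℝ (Fin 3)) := {k | ∀ i, k i ∈ Set.Ioo (-Real.pi) Real.pi}

lemma measurable_coord (i : Fin 3) : Measurable (fun x : EuclideanSpace ℝ (Fin 3) => x i) :=
  (measurable_pi_apply i).comp (MeasurableEquiv.toLp 2 (Fin 3 → ℝ)).symm.measurable

lemma measurableSet_T3 : MeasurableSet T3 := by
  have : T3 = ⋂ i, (fun x : EuclideanSpace ℝ (Fin 3) => x i) ⁻¹' Set.Ioc (-π) π := by
    ext x; simp [T3, Set.mem_iInter]
  rw [this]
  exact MeasurableSet.iInter fun i => (measurable_coord i) measurableSet_Ioc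

lemma measurableSet_B3 : MeasurableSet B3 := by
  have : B3 = ⋂ i, (fun x : EuclideanSpace ℝ (Fin 3) => x i) ⁻¹' Set.Ioo (-π) π := by
    ext x; simp [B3, Set.mem_iInter]
  rw [this]
  exact MeasurableSet.iInter fun i => (measurable_coord i) measurableSet_Ioo

lemma volume_T3_lt_top : volume T3 < ⊤ := by
  have hsub : T3 ⊆ Metric.closedBall (0 : EuclideanSpace ℝ (Fin 3)) 7 := by
    intro x hx
    rw [Metric.mem_closedBall, dist_zero_right, EuclideanSpace.norm_eq]
    have hb : ∀ i : Fin 3, ‖x i‖^2 ≤ 16 := by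
      intro i
      have h1 := (hx i).1; have h2 := (hx i).2
      have hpi : π ≤ 4 := by linarith [Real.pi_le_four]
      rw [Real.norm_eq_abs]
      have : |x i| ≤ 4 := by rw [abs_le]; constructor <;> nlinarith
      nlinarith [abs_nonneg (x i), sq_abs (x i)]
    have : ∑ i, ‖x i‖^2 ≤ 48 := by
      calc ∑ i, ‖x i‖^2 ≤ ∑ _i : Fin 3, (16:ℝ) := Finset.sum_le_sum fun i _ => hb i
        _ = 48 := by simp; norm_num
    calc Real.sqrt (∑ i, ‖x i‖^2) ≤ Real.sqrt 48 := Real.sqrt_le_sqrt this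
      _ ≤ 7 := by
          rw [show (48:ℝ) = 48 by rfl]
          have : (48:ℝ) ≤ 49 := by norm_num
          calc Real.sqrt 48 ≤ Real.sqrt 49 := Real.sqrt_le_sqrt this
            _ = 7 := by rw [show (49:ℝ) = 7^2 by norm_num, Real.sqrt_sq]; norm_num
  exact lt_of_le_of_lt (measure_mono hsub) measure_closedBall_lt_top

lemma volume_T3_pos : 0 < volume T3 := by
  have hopen : IsOpen B3 := by
    have : B3 = ⋂ i, (fun x : EuclideanSpace ℝ (Fin 3) => x i) ⁻¹' Set.Ioo (-π) π := by
      ext x; simp [B3, Set.mem_iInter]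
    rw [this]
    exact isOpen_iInter_of_finite fun i =>
      (EuclideanSpace.proj i).continuous.isOpen_preimage _ isOpen_Ioo
  have hne : (B3 : Set (EuclideanSpace ℝ (Fin 3))).Nonempty := by
    refine ⟨0, fun i => ?_⟩
    simp only [Set.mem_Ioo]
    constructor
    · simpa using neg_neg_iff_pos.mpr Real.pi_pos
    · simpa using Real.pi_pos
  have hsub : B3 ⊆ T3 := fun x hx i => ⟨(hx i).1, (hx i).2.le⟩
  exact lt_of_lt_of_le (hopen.measure_pos volume hne) (measure_mono hsub)

lemma volume_hyperplane (i : Fin 3) (c : ℝ) :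
    volume {x : EuclideanSpace ℝ (Fin 3) | x i = c} = 0 := by
  have hmp := EuclideanSpace.volume_preserving_symm_measurableEquiv_toLp (Fin 3)
  have hset : {x : EuclideanSpace ℝ (Fin 3) | x i = c} =
      (MeasurableEquiv.toLp 2 (Fin 3 → ℝ)).symm ⁻¹' {y : Fin 3 → ℝ | y i = c} := rfl
  rw [hset, hmp.measure_preimage]
  · have : {y : Fin 3 → ℝ | y i = c} =
        Set.pi Set.univ (fun j => if j = i then {c} else Set.univ) := by
      ext y
      simp only [Set.mem_setOf_eq, Set.mem_pi, Set.mem_univ, true_implies]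
      constructor
      · intro h j
        by_cases hj : j = i
        · subst hj; simp [h]
        · simp [hj]
      · intro h
        have := h i
        simpa using this
    rw [this, volume_pi_pi]
    exact Finset.prod_eq_zero (Finset.mem_univ i) (by simp)
  · have hm : MeasurableSet {y : Fin 3 → ℝ | y i = c} :=
      measurableSet_eq_fun (measurable_pi_apply i) measurable_const
    exact hm.nullMeasurableSet

lemma T3_ae_eq_B3 : T3 =ᵐ[volume] B3 := by
  rw [Filter.eventuallyEq_set]
  have hsub : B3 ⊆ T3 := fun x hx i => ⟨(hx i).1, (hx i).2.le⟩
  have hnull : volume (T3 \ B3) = 0 := by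
    have hs : T3 \ B3 ⊆ ⋃ i, {x : EuclideanSpace ℝ (Fin 3) | x i = π} := by
      rintro x ⟨hxT, hxB⟩
      simp only [B3, Set.mem_setOf_eq, not_forall] at hxB
      obtain ⟨i, hi⟩ := hxB
      refine Set.mem_iUnion.2 ⟨i, ?_⟩
      have h1 := (hxT i).1; have h2 := (hxT i).2
      simp only [Set.mem_setOf_eq]
      by_contra hne
      exact hi ⟨h1, lt_of_le_of_ne h2 hne⟩
    refine measure_mono_null hs ?_
    refine measure_iUnion_null fun i => volume_hyperplane i π
  have : ∀ᵐ x ∂(volume : Measure (EuclideanSpace ℝ (Fin 3))), x ∉ T3 \ B3 :=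
    (ae_iff.2 (by simp only [not_not]; exact hnull))
  filter_upwards [this] with x hx
  constructor
  · intro hxT
    by_contra hxB
    exact hx ⟨hxT, hxB⟩
  · exact fun hxB => hsub hxB

lemma B3_neg_mem {x : EuclideanSpace ℝ (Fin 3)} (hx : x ∈ B3) : -x ∈ B3 := by
  intro i
  have h := hx i
  simp only [Set.mem_Ioo] at h ⊢
  have : (-x) i = -(x i) := rfl
  rw [this]
  constructor <;> linarith [h.1, h.2]

lemma smul_neg_one_B3 : (-1 : ℝ) • B3 = B3 := by
  ext x
  constructor
  · rintro ⟨y, hy, rfl⟩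
    show (-1 : ℝ) • y ∈ B3
    rw [show (-1 : ℝ) • y = -y from by rw [neg_smul, one_smul]]
    exact B3_neg_mem hy
  · intro hx
    refine ⟨-x, B3_neg_mem hx, ?_⟩
    show (-1 : ℝ) • (-x) = x
    rw [show (-1 : ℝ) • (-x) = -(-x) from by rw [neg_smul, one_smul], neg_neg]

lemma setIntegral_T3_neg (g : EuclideanSpace ℝ (Fin 3) → ℝ) :
    ∫ t in T3, g (-t) = ∫ t in T3, g t := by
  have h1 : ∫ t in T3, g (-t) = ∫ t in B3, g (-t) := setIntegral_congr_set T3_ae_eq_B3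
  have h2 : (∫ t in T3, g t) = ∫ t in B3, g t := setIntegral_congr_set T3_ae_eq_B3
  rw [h1, h2]
  have h3 : (∫ x in B3, g (-x)) = ∫ x in B3, g ((-1 : ℝ) • x) := by
    apply setIntegral_congr_fun measurableSet_B3
    intro x _
    show g (-x) = g ((-1 : ℝ) • x)
    rw [show (-1 : ℝ) • x = -x from by rw [neg_smul, one_smul]]
  rw [h3, Measure.setIntegral_comp_smul volume g B3 (by norm_num : (-1:ℝ) ≠ 0)]
  rw [smul_neg_one_B3]
  have h4 : |(((-1:ℝ) ^ (Module.finrank ℝ (EuclideanSpace ℝ (Fin 3))))⁻¹)| = 1 := by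
    rw [finrank_euclideanSpace_fin]
    norm_num
  rw [h4, one_smul]

lemma eps_le_six (k : EuclideanSpace ℝ (Fin 3)) : eps k ≤ 6 := by
  rw [eps_apply]
  have h0 := Real.neg_one_le_cos (k 0)
  have h1 := Real.neg_one_le_cos (k 1)
  have h2 := Real.neg_one_le_cos (k 2)
  linarith

lemma eps_zero : eps (0 : EuclideanSpace ℝ (Fin 3)) = 0 := by
  rw [eps_apply]
  have : ∀ i : Fin 3, (0 : EuclideanSpace ℝ (Fin 3)) i = 0 := fun i => rfl
  rw [this 0, this 1, this 2, Real.cos_zero]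
  ring

lemma w1_zero_le (t : EuclideanSpace ℝ (Fin 3)) : w1 0 t ≤ 12 := by
  unfold w1
  rw [eps_zero]
  have := eps_le_six ((1/2 : ℝ) • ((0 : EuclideanSpace ℝ (Fin 3)) + t))
  have := eps_le_six t
  linarith

lemma w1_zero_pos {t : EuclideanSpace ℝ (Fin 3)} (ht : t ∈ T3) (ht0 : t ≠ 0) :
    0 < w1 0 t := by
  have hex : ∃ i, t i ≠ 0 := by
    by_contra h
    push_neg at h
    exact ht0 (by ext i; exact h i)
  obtain ⟨i, hi⟩ := hex
  have harg : ((1/2 : ℝ) • ((0 : EuclideanSpace ℝ (Fin 3)) + t)) i = (1/2) * t i := by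
    simp [PiLp.smul_apply, PiLp.add_apply, smul_eq_mul]
  have hlt : Real.cos (((1/2 : ℝ) • ((0 : EuclideanSpace ℝ (Fin 3)) + t)) i) < 1 := by
    rw [harg]
    have h1 := (ht i).1; have h2 := (ht i).2; have hπ := Real.pi_pos
    have hne : (1/2) * t i ≠ 0 := by
      intro h; apply hi; linarith [h]
    refine lt_of_le_of_ne (Real.cos_le_one _) ?_
    intro hcos
    exact hne ((Real.cos_eq_one_iff_of_lt_of_lt (by linarith) (by linarith)).1 hcos)
  have hpos : 0 < eps ((1/2 : ℝ) • ((0 : EuclideanSpace ℝ (Fin 3)) + t)) := by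
    unfold eps
    apply Finset.sum_pos'
    · intro j _
      have := Real.cos_le_one (((1/2 : ℝ) • ((0 : EuclideanSpace ℝ (Fin 3)) + t)) j)
      linarith
    · exact ⟨i, Finset.mem_univ i, by linarith⟩
  unfold w1
  have := eps_nonneg (0 : EuclideanSpace ℝ (Fin 3))
  have := eps_nonneg t
  linarith

lemma continuous_eps : Continuous eps := by
  unfold eps
  exact continuous_finset_sum _ fun i _ =>
    (continuous_const.sub (Real.continuous_cos.comp (EuclideanSpace.proj i).continuous))

lemma continuous_w1 (k : EuclideanSpace ℝ (Fin 3)) : Continuous (fun t => w1 k t) := by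
  unfold w1
  have h1 : Continuous fun t : EuclideanSpace ℝ (Fin 3) => (1/2 : ℝ) • (k + t) :=
    by fun_prop
  exact (continuous_const.add (continuous_eps.comp h1)).add continuous_eps


theorem stmt16 :
    ∀ k ∈ T3, ∀ z < (0 : ℝ),
      0 < eps k + 6 - z - mu0 ^ 2 * ∫ t in T3, (w1 k t - z)⁻¹ := by
  intro k hk z hz
  by_cases hI : IntegrableOn (fun t => (w1 (0 : EuclideanSpace ℝ (Fin 3)) t)⁻¹) T3 volume
  swap
  · have hI0 : I0 = 0 := integral_undef hI
    have hmu : mu0 = 0 := by rw [mu0, hI0, Real.sqrt_zero, div_zero]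
    rw [hmu]
    have := eps_nonneg k
    nlinarith
  · set b := -z with hb_def
    have hb : 0 < b := by rw [hb_def]; linarith
    have hT3top : volume T3 ≠ ⊤ := volume_T3_lt_top.ne
    -- a.e. facts on restricted measure
    have h0ae : ∀ᵐ t ∂(volume.restrict T3), t ≠ (0 : EuclideanSpace ℝ (Fin 3)) := by
      apply ae_restrict_of_ae
      rw [ae_iff]
      have : {t : EuclideanSpace ℝ (Fin 3) | ¬ t ≠ 0} = {(0 : EuclideanSpace ℝ (Fin 3))} := by
        ext t; simp
      rw [this]
      exact measure_singleton 0
    have hmem : ∀ᵐ t ∂(volume.restrict T3), t ∈ T3 := ae_restrict_mem measurableSet_T3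
    -- I0 is positive
    have hconst : IntegrableOn (fun _ : EuclideanSpace ℝ (Fin 3) => (12 : ℝ)⁻¹) T3 volume := by
      apply integrableOn_const volume_T3_lt_top.ne
    have hlow : (∫ _t in T3, (12:ℝ)⁻¹) ≤ I0 := by
      apply integral_mono_ae hconst hI
      filter_upwards [hmem, h0ae] with t htm ht0
      have hp := w1_zero_pos htm ht0
      have hle := w1_zero_le t
      exact inv_anti₀ hp hle
    have hIpos : 0 < I0 := by
      have hc : (∫ _t in T3, (12:ℝ)⁻¹) = (volume T3).toReal * (12:ℝ)⁻¹ := by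
        rw [setIntegral_const, smul_eq_mul]; rfl
      have htr : 0 < (volume T3).toReal :=
        ENNReal.toReal_pos volume_T3_pos.ne' hT3top
      rw [hc] at hlow
      nlinarith
    have hmu2 : mu0 ^ 2 = 6 / I0 := by
      rw [mu0, div_pow, Real.sq_sqrt (by norm_num : (0:ℝ) ≤ 6), Real.sq_sqrt hIpos.le]
    -- integrability of the two pieces
    have hwpos : ∀ u : EuclideanSpace ℝ (Fin 3), 0 < w1 k u + b :=
      fun u => by have := w1_nonneg k u; linarith
    have hbound : ∀ u : EuclideanSpace ℝ (Fin 3), ‖(w1 k u + b)⁻¹‖ ≤ b⁻¹ := by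
      intro u
      rw [Real.norm_eq_abs, abs_of_pos (inv_pos.2 (hwpos u))]
      exact inv_anti₀ hb (by have := w1_nonneg k u; linarith)
    have hcont1 : Continuous fun t => (w1 k t + b)⁻¹ :=
      ((continuous_w1 k).add continuous_const).inv₀ fun u => (hwpos u).ne'
    have hf : IntegrableOn (fun t => (w1 k t + b)⁻¹) T3 volume :=
      Measure.integrableOn_of_bounded hT3top hcont1.aestronglyMeasurable
        (Filter.Eventually.of_forall fun u => hbound u)
    have hcont2 : Continuous fun t : EuclideanSpace ℝ (Fin 3) => (w1 k (-t) + b)⁻¹ :=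
      hcont1.comp continuous_neg
    have hg : IntegrableOn (fun t => (w1 k (-t) + b)⁻¹) T3 volume :=
      Measure.integrableOn_of_bounded hT3top hcont2.aestronglyMeasurable
        (Filter.Eventually.of_forall fun u => hbound (-u))
    -- the symmetrized integral inequality
    have hRHSint : IntegrableOn (fun t => (2 + eps k / 3) * (w1 0 t)⁻¹) T3 volume :=
      hI.const_mul _
    have hptwise : ∀ᵐ t ∂(volume.restrict T3),
        (w1 k t + b)⁻¹ + (w1 k (-t) + b)⁻¹ ≤ (2 + eps k / 3) * (w1 0 t)⁻¹ := by
      filter_upwards [hmem, h0ae] with t htm ht0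
      exact star k t htm hb (w1_zero_pos htm ht0)
    have hmono : (∫ t in T3, ((w1 k t + b)⁻¹ + (w1 k (-t) + b)⁻¹)) ≤
        ∫ t in T3, (2 + eps k / 3) * (w1 0 t)⁻¹ :=
      integral_mono_ae (hf.add hg) hRHSint hptwise
    have hsplit : (∫ t in T3, ((w1 k t + b)⁻¹ + (w1 k (-t) + b)⁻¹)) =
        (∫ t in T3, (w1 k t + b)⁻¹) + ∫ t in T3, (w1 k (-t) + b)⁻¹ :=
      integral_add hf hg
    have hsym : (∫ t in T3, (w1 k (-t) + b)⁻¹) = ∫ t in T3, (w1 k t + b)⁻¹ :=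
      setIntegral_T3_neg (fun u => (w1 k u + b)⁻¹)
    have hRHSval : (∫ t in T3, (2 + eps k / 3) * (w1 0 t)⁻¹) = (2 + eps k / 3) * I0 :=
      integral_const_mul _ _
    have hJ : (∫ t in T3, (w1 k t + b)⁻¹) ≤ (1 + eps k / 6) * I0 := by
      rw [hsplit, hsym, hRHSval] at hmono
      linarith
    -- rewrite the goal integral
    have hzw : (∫ t in T3, (w1 k t - z)⁻¹) = ∫ t in T3, (w1 k t + b)⁻¹ := by
      apply setIntegral_congr_fun measurableSet_T3
      intro t _
      rw [hb_def]
      ring_nf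
    rw [hzw, hmu2]
    have hfinal : 6 / I0 * (∫ t in T3, (w1 k t + b)⁻¹) ≤ 6 + eps k := by
      have h1 : 6 / I0 * (∫ t in T3, (w1 k t + b)⁻¹) ≤ 6 / I0 * ((1 + eps k / 6) * I0) :=
        mul_le_mul_of_nonneg_left hJ (by positivity)
      have h2 : 6 / I0 * ((1 + eps k / 6) * I0) = 6 + eps k := by
        field_simp
      linarith
    linarith
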